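/- Let L be the model determined by the limit of an inverse system of complete lattices (L_α)_{α<κ} with locally completely additive projections, and let f : L → L be α-monotone for every α < κ. Then the set of fixed points of f is a complete lattice under the ordering ⊑; in particular f has a least fixed point x with respect to ⊑, and for every z with f(z) ⊑ z one has x ⊑ z. -/

import Mathlib

universe u

abbrev Idx (κ : Ordinal) := {α : Ordinal // α < κ}

def Compat {κ : Ordinal} (L : Idx κ → Type u) [∀ α, CompleteLattice (L α)]
    (h : ∀ α β : Idx κ, β < α → L α → L β) : Set (∀ α, L α) :=
  {x | ∀ (α β : Idx κ) (hβα : β < α), h α β hβα (x α) = x β}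

/-- The preorder ⊑_α on the inverse limit. -/
def rel {κ : Ordinal} (L : Idx κ → Type u) [∀ α, CompleteLattice (L α)]
    (α : Idx κ) (x y : ∀ γ, L γ) : Prop :=
  x α ≤ y α ∧ ∀ β < α, x β = y β

/-- The lexicographic order ⊑ : x ⊑ y iff x = y or x ⊏_α y for some α. -/
def strOrd {κ : Ordinal} (L : Idx κ → Type u) [∀ α, CompleteLattice (L α)]
    (x y : ∀ γ, L γ) : Prop :=
  x = y ∨ ∃ α : Idx κ, rel L α x y ∧ ¬ rel L α y x

namespace FixAux

variable {κ : Ordinal}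

theorem idx_wf : WellFounded ((· < ·) : Idx κ → Idx κ → Prop) := wellFounded_lt

structure Sys (L : Idx κ → Type u) [∀ α, CompleteLattice (L α)] where
  h : ∀ α β : Idx κ, β < α → L α → L β
  k : ∀ α β : Idx κ, β < α → L β → L α
  hmono : ∀ (α β : Idx κ) (hβα : β < α), Monotone (h α β hβα)
  kmono : ∀ (α β : Idx κ) (hβα : β < α), Monotone (k α β hβα)
  hk : ∀ (α β : Idx κ) (hβα : β < α) (x : L β), h α β hβα (k α β hβα x) = x
  kh : ∀ (α β : Idx κ) (hβα : β < α) (y : L α), k α β hβα (h α β hβα y) ≤ y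
  comp : ∀ (α β γ : Idx κ) (hγβ : γ < β) (hβα : β < α) (x : L α),
      h β γ hγβ (h α β hβα x) = h α γ (hγβ.trans hβα) x
  lca : ∀ (α β : Idx κ) (hβα : β < α), ∀ Y : Set (L α), Y.Nonempty →
      ∀ x : L β, (∀ y ∈ Y, h α β hβα y = x) → h α β hβα (sSup Y) = x

namespace Sys

variable {L : Idx κ → Type u} [∀ α, CompleteLattice (L α)] (S : Sys L)

theorem hinf_image (α β : Idx κ) (hβα : β < α) (T : Set (L α)) :
    S.h α β hβα (sInf T) = sInf (S.h α β hβα '' T) := by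
  apply le_antisymm
  · exact le_sInf fun b hb => by
      obtain ⟨t, ht, rfl⟩ := hb
      exact S.hmono α β hβα (sInf_le ht)
  · have hkle : S.k α β hβα (sInf (S.h α β hβα '' T)) ≤ sInf T :=
      le_sInf fun t ht =>
        le_trans (S.kmono α β hβα (sInf_le ⟨t, ht, rfl⟩)) (S.kh α β hβα t)
    calc sInf (S.h α β hβα '' T)
        = S.h α β hβα (S.k α β hβα (sInf (S.h α β hβα '' T))) := (S.hk α β hβα _).symm
      _ ≤ S.h α β hβα (sInf T) := S.hmono α β hβα hkle

theorem hinf_const (α β : Idx κ) (hβα : β < α) (T : Set (L α)) (hT : T.Nonempty)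
    (x : L β) (hc : ∀ t ∈ T, S.h α β hβα t = x) : S.h α β hβα (sInf T) = x := by
  rw [S.hinf_image α β hβα T]
  obtain ⟨t0, ht0⟩ := hT
  apply le_antisymm
  · exact sInf_le ⟨t0, ht0, hc t0 ht0⟩
  · exact le_sInf fun b hb => by obtain ⟨t, ht, rfl⟩ := hb; exact (hc t ht).ge

noncomputable def ext (α : Idx κ) (u : L α) : ∀ γ : Idx κ, L γ := fun γ =>
  if hlt : γ < α then S.h α γ hlt u
  else if hgt : α < γ then sSup {v : L γ | S.h γ α hgt v = u}
  else cast (congrArg L (le_antisymm (not_lt.1 hgt) (not_lt.1 hlt)).symm) u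

theorem ext_lt (α : Idx κ) (u : L α) (γ : Idx κ) (hγ : γ < α) :
    S.ext α u γ = S.h α γ hγ u := dif_pos hγ

theorem ext_self (α : Idx κ) (u : L α) : S.ext α u α = u := by
  unfold ext
  rw [dif_neg (lt_irrefl α), dif_neg (lt_irrefl α)]
  exact eq_of_heq (cast_heq _ _)

theorem ext_gt (α : Idx κ) (u : L α) (γ : Idx κ) (hγ : α < γ) :
    S.ext α u γ = sSup {v : L γ | S.h γ α hγ v = u} := by
  unfold ext
  rw [dif_neg (asymm hγ), dif_pos hγ]

theorem fiber_ne (α : Idx κ) (u : L α) (γ : Idx κ) (hγ : α < γ) :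
    {v : L γ | S.h γ α hγ v = u}.Nonempty :=
  ⟨S.k γ α hγ u, S.hk γ α hγ u⟩

theorem ext_top (α : Idx κ) (u : L α) (γ : Idx κ) (hγ : α < γ) :
    S.h γ α hγ (S.ext α u γ) = u := by
  rw [S.ext_gt α u γ hγ]
  exact S.lca γ α hγ _ (S.fiber_ne α u γ hγ) u (fun v hv => hv)

theorem ext_mem (α : Idx κ) (u : L α) : S.ext α u ∈ Compat L S.h := by
  intro γ β hβγ
  rcases lt_trichotomy γ α with hγ | hγ | hγ
  · rw [S.ext_lt α u γ hγ, S.ext_lt α u β (hβγ.trans hγ), S.comp]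
  · subst hγ
    rw [S.ext_self, S.ext_lt γ u β hβγ]
  · -- α < γ
    rcases lt_trichotomy β α with hβ | hβ | hβ
    · -- β < α < γ
      rw [S.ext_lt α u β hβ]
      have h1 : S.h γ β hβγ (S.ext α u γ) =
          S.h α β hβ (S.h γ α hγ (S.ext α u γ)) := by
        rw [S.comp γ α β hβ hγ]
      rw [h1, S.ext_top α u γ hγ]
    · subst hβ
      rw [S.ext_self]
      exact S.ext_top β u γ hγ
    · -- α < β < γ
      rw [S.ext_gt α u β hβ, S.ext_gt α u γ hγ]
      apply le_antisymm
      · apply le_sSup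
        show S.h β α hβ (S.h γ β hβγ (sSup {v : L γ | S.h γ α hγ v = u})) = u
        rw [S.comp γ β α hβ hβγ]
        exact S.lca γ α (hβ.trans hβγ) _
          (by
            obtain ⟨v, hv⟩ := S.fiber_ne α u γ hγ
            exact ⟨v, hv⟩) u (fun v hv => hv)
      · apply sSup_le
        intro v hv
        have hwne : {w : L γ | S.h γ β hβγ w = v}.Nonempty := ⟨S.k γ β hβγ v, S.hk γ β hβγ v⟩
        have hw : S.h γ β hβγ (sSup {w : L γ | S.h γ β hβγ w = v}) = v :=
          S.lca γ β hβγ _ hwne v (fun _ hx => hx)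
        have hwF : sSup {w : L γ | S.h γ β hβγ w = v} ∈ {w : L γ | S.h γ α hγ w = u} := by
          show S.h γ α hγ _ = u
          have : S.h β α hβ (S.h γ β hβγ (sSup {w : L γ | S.h γ β hβγ w = v})) =
              S.h γ α (hβ.trans hβγ) (sSup {w : L γ | S.h γ β hβγ w = v}) :=
            S.comp γ β α hβ hβγ _
          rw [hw] at this
          rw [← this]
          exact hv
        calc v = S.h γ β hβγ (sSup {w : L γ | S.h γ β hβγ w = v}) := hw.symm
          _ ≤ S.h γ β hβγ (sSup {w : L γ | S.h γ α hγ w = u}) :=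
            S.hmono γ β hβγ (le_sSup hwF)

end Sys
end FixAux

namespace FixAux
namespace Sys

variable {κ : Ordinal} {L : Idx κ → Type u} [∀ α, CompleteLattice (L α)] (S : Sys L)
variable (f : (∀ α, L α) → (∀ α, L α))

/-- the component function of `f` at level `α` -/
noncomputable def F (α : Idx κ) (u : L α) : L α := f (S.ext α u) α

theorem f_comp (fmono : ∀ α : Idx κ, ∀ x ∈ Compat L S.h, ∀ y ∈ Compat L S.h,
    rel L α x y → rel L α (f x) (f y)) (x : ∀ γ, L γ) (hx : x ∈ Compat L S.h) (α : Idx κ) :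
    f x α = S.F f α (x α) := by
  have he : S.ext α (x α) ∈ Compat L S.h := S.ext_mem α (x α)
  have h1 : rel L α x (S.ext α (x α)) :=
    ⟨(S.ext_self α (x α)).symm.le, fun β hβ => by
      rw [S.ext_lt α (x α) β hβ, hx α β hβ]⟩
  have h2 : rel L α (S.ext α (x α)) x :=
    ⟨(S.ext_self α (x α)).le, fun β hβ => by
      rw [S.ext_lt α (x α) β hβ, hx α β hβ]⟩
  exact le_antisymm (fmono α x hx _ he h1).1 (fmono α _ he x hx h2).1

theorem F_mono (fmono : ∀ α : Idx κ, ∀ x ∈ Compat L S.h, ∀ y ∈ Compat L S.h,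
    rel L α x y → rel L α (f x) (f y)) (α : Idx κ) (u u' : L α) (hle : u ≤ u')
    (hfib : ∀ (β : Idx κ) (hβ : β < α), S.h α β hβ u = S.h α β hβ u') :
    S.F f α u ≤ S.F f α u' := by
  have h1 : rel L α (S.ext α u) (S.ext α u') :=
    ⟨by rw [S.ext_self, S.ext_self]; exact hle,
     fun β hβ => by rw [S.ext_lt α u β hβ, S.ext_lt α u' β hβ, hfib β hβ]⟩
  exact (fmono α _ (S.ext_mem α u) _ (S.ext_mem α u') h1).1

variable (X : Set (∀ γ, L γ))

noncomputable def step (α : Idx κ) (prev : ∀ β : Idx κ, β < α → L β) : L α :=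
  sInf {u : L α | ((∀ (β : Idx κ) (hβ : β < α), S.h α β hβ u = prev β hβ) ∧
      sSup ({u' : L α | ∃ x ∈ X, (∀ (β : Idx κ) (hβ : β < α), x β = prev β hβ) ∧ x α = u'} ∪
        {sInf {u' : L α | ∀ (β : Idx κ) (hβ : β < α), S.h α β hβ u' = prev β hβ}}) ≤ u) ∧
      S.F f α u ≤ u}

noncomputable def seq : ∀ α : Idx κ, L α :=
  idx_wf.fix (fun α ih => S.step f X α ih)

/-- the fibre over the initial segment of the sequence below `α` -/
def Pset (α : Idx κ) : Set (L α) :=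
  {u : L α | ∀ (β : Idx κ) (hβ : β < α), S.h α β hβ u = S.seq f X β}

noncomputable def sval (α : Idx κ) : L α :=
  sSup ({u' : L α | ∃ x ∈ X, (∀ (β : Idx κ) (hβ : β < α), x β = S.seq f X β) ∧ x α = u'} ∪
    {sInf (S.Pset f X α)})

theorem seq_def (α : Idx κ) :
    S.seq f X α =
      sInf {u : L α | (u ∈ S.Pset f X α ∧ S.sval f X α ≤ u) ∧ S.F f α u ≤ u} := by
  show idx_wf.fix (fun α ih => S.step f X α ih) α = _
  rw [WellFounded.fix_eq]
  rfl

end Sys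
end FixAux

namespace FixAux
namespace Sys

variable {κ : Ordinal} {L : Idx κ → Type u} [∀ α, CompleteLattice (L α)] (S : Sys L)
variable (f : (∀ α, L α) → (∀ α, L α)) (X : Set (∀ γ, L γ))

theorem sval_eq (α : Idx κ) : S.sval f X α =
    sSup ({u' : L α | ∃ x ∈ X, (∀ (β : Idx κ) (hβ : β < α), x β = S.seq f X β) ∧ x α = u'} ∪
      {sInf (S.Pset f X α)}) := rfl

def Inv (α : Idx κ) : Prop :=
  S.seq f X α ∈ S.Pset f X α ∧ S.F f α (S.seq f X α) = S.seq f X α ∧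
    S.sval f X α ≤ S.seq f X α ∧
    ∀ u ∈ S.Pset f X α, S.sval f X α ≤ u → S.F f α u ≤ u → S.seq f X α ≤ u

theorem seq_inv
    (fS : ∀ x ∈ Compat L S.h, f x ∈ Compat L S.h)
    (fmono : ∀ α : Idx κ, ∀ x ∈ Compat L S.h, ∀ y ∈ Compat L S.h,
      rel L α x y → rel L α (f x) (f y))
    (hX : X ⊆ {x ∈ Compat L S.h | f x = x}) (α : Idx κ) : S.Inv f X α := by
  refine idx_wf.induction α ?_
  clear α; intro α IH
  have hPsup : ∀ T ⊆ S.Pset f X α, T.Nonempty → sSup T ∈ S.Pset f X α := by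
    intro T hT hTne β hβ
    exact S.lca α β hβ T hTne _ (fun t ht => hT ht β hβ)
  have hPinf : ∀ T ⊆ S.Pset f X α, T.Nonempty → sInf T ∈ S.Pset f X α := by
    intro T hT hTne β hβ
    exact S.hinf_const α β hβ T hTne _ (fun t ht => hT ht β hβ)
  have hPne : (S.Pset f X α).Nonempty := by
    by_cases hb : ∃ β : Idx κ, β < α
    · obtain ⟨β₀, hβ₀⟩ := hb
      refine ⟨sInf {u : L α | ∃ (β : Idx κ) (hβ : β < α),
          u = sSup {w : L α | S.h α β hβ w = S.seq f X β}}, ?_⟩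
      intro β' hβ'
      rw [S.hinf_image α β' hβ']
      have hval : ∀ (β : Idx κ) (hβ : β < α),
          S.seq f X β' ≤ S.h α β' hβ' (sSup {w : L α | S.h α β hβ w = S.seq f X β}) := by
        intro β hβ
        have hmfib : S.h α β hβ (sSup {w : L α | S.h α β hβ w = S.seq f X β}) = S.seq f X β :=
          S.lca α β hβ _ ⟨S.k α β hβ _, S.hk α β hβ _⟩ _ (fun w hw => hw)
        rcases lt_trichotomy β' β with hc | hc | hc
        · have hcomp := S.comp α β β' hc hβ (sSup {w : L α | S.h α β hβ w = S.seq f X β})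
          rw [hmfib] at hcomp
          have : S.h α β' hβ' (sSup {w : L α | S.h α β hβ w = S.seq f X β}) = S.seq f X β' := by
            rw [← hcomp]
            exact (IH β hβ).1 β' hc
          exact this.ge
        · subst hc
          exact hmfib.ge
        · have hkfib : S.k α β' hβ' (S.seq f X β') ∈
              {w : L α | S.h α β hβ w = S.seq f X β} := by
            show S.h α β hβ _ = _
            have h2 := S.comp α β' β hc hβ' (S.k α β' hβ' (S.seq f X β'))
            rw [S.hk α β' hβ'] at h2
            rw [(IH β' hβ').1 β hc] at h2
            exact h2.symm
          calc S.seq f X β'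
              = S.h α β' hβ' (S.k α β' hβ' (S.seq f X β')) := (S.hk α β' hβ' _).symm
            _ ≤ S.h α β' hβ' (sSup {w : L α | S.h α β hβ w = S.seq f X β}) :=
                S.hmono α β' hβ' (le_sSup hkfib)
      have hself : S.h α β' hβ' (sSup {w : L α | S.h α β' hβ' w = S.seq f X β'}) =
          S.seq f X β' :=
        S.lca α β' hβ' _ ⟨S.k α β' hβ' _, S.hk α β' hβ' _⟩ _ (fun w hw => hw)
      apply le_antisymm
      · exact sInf_le ⟨_, ⟨β', hβ', rfl⟩, hself⟩
      · apply le_sInf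
        rintro b ⟨w, ⟨β, hβ, rfl⟩, rfl⟩
        exact hval β hβ
    · push_neg at hb
      exact ⟨⊤, fun β hβ => absurd hβ (not_lt.2 (hb β))⟩
  have hsubP : ({u' : L α | ∃ x ∈ X, (∀ (β : Idx κ) (hβ : β < α), x β = S.seq f X β) ∧ x α = u'} ∪
      {sInf (S.Pset f X α)}) ⊆ S.Pset f X α := by
    rintro u (⟨x, hxX, hag, rfl⟩ | hu)
    · intro β hβ
      have hxC : x ∈ Compat L S.h := (hX hxX).1
      rw [hxC α β hβ, hag β hβ]
    · rw [Set.mem_singleton_iff] at hu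
      subst hu
      exact hPinf _ (fun t ht => ht) hPne
  have hsP : S.sval f X α ∈ S.Pset f X α := by
    rw [S.sval_eq f X α]
    exact hPsup _ hsubP ⟨sInf (S.Pset f X α), Or.inr rfl⟩
  have hFP : ∀ u ∈ S.Pset f X α, S.F f α u ∈ S.Pset f X α := by
    intro u hu β hβ
    have he := S.ext_mem α u
    have h1 : S.h α β hβ (S.F f α u) = f (S.ext α u) β := fS _ he α β hβ
    rw [h1, S.f_comp f fmono _ he β, S.ext_lt α u β hβ, hu β hβ, (IH β hβ).2.1]
  set Pre : Set (L α) :=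
    {u : L α | (u ∈ S.Pset f X α ∧ S.sval f X α ≤ u) ∧ S.F f α u ≤ u} with hPre
  have hPreP : Pre ⊆ S.Pset f X α := fun u hu => hu.1.1
  have hτ : sSup (S.Pset f X α) ∈ S.Pset f X α := hPsup _ (fun t ht => ht) hPne
  have hτPre : sSup (S.Pset f X α) ∈ Pre :=
    ⟨⟨hτ, le_sSup hsP⟩, le_sSup (hFP _ hτ)⟩
  have hPrene : Pre.Nonempty := ⟨_, hτPre⟩
  have hzP : sInf Pre ∈ S.Pset f X α := hPinf _ hPreP hPrene
  have hsz : S.sval f X α ≤ sInf Pre := le_sInf fun u hu => hu.1.2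
  have hFz_le : S.F f α (sInf Pre) ≤ sInf Pre := le_sInf fun u hu =>
    le_trans (S.F_mono f fmono α _ u (sInf_le hu)
      (fun β hβ => (hzP β hβ).trans (hu.1.1 β hβ).symm)) hu.2
  have hsF : S.sval f X α ≤ S.F f α (sInf Pre) := by
    rw [S.sval_eq f X α]
    apply sSup_le
    rintro u (⟨x, hxX, hag, rfl⟩ | hu)
    · have hxC : x ∈ Compat L S.h := (hX hxX).1
      have hxP : x α ∈ S.Pset f X α := fun β hβ => by rw [hxC α β hβ, hag β hβ]
      have hxfix : S.F f α (x α) = x α := by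
        rw [← S.f_comp f fmono x hxC α, (hX hxX).2]
      calc x α = S.F f α (x α) := hxfix.symm
        _ ≤ S.F f α (sInf Pre) := by
            refine S.F_mono f fmono α _ _ ?_ (fun β hβ => (hxP β hβ).trans (hzP β hβ).symm)
            refine le_trans ?_ hsz
            rw [S.sval_eq f X α]
            exact le_sSup (Or.inl ⟨x, hxX, hag, rfl⟩)
    · rw [Set.mem_singleton_iff] at hu
      subst hu
      exact sInf_le (hFP _ hzP)
  have hFzPre : S.F f α (sInf Pre) ∈ Pre :=
    ⟨⟨hFP _ hzP, hsF⟩, S.F_mono f fmono α _ _ hFz_le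
      (fun β hβ => (hFP _ hzP β hβ).trans (hzP β hβ).symm)⟩
  have hfix : S.F f α (sInf Pre) = sInf Pre := le_antisymm hFz_le (sInf_le hFzPre)
  have hseq : S.seq f X α = sInf Pre := S.seq_def f X α
  refine ⟨?_, ?_, ?_, ?_⟩
  · rw [hseq]; exact hzP
  · rw [hseq]; exact hfix
  · rw [hseq]; exact hsz
  · intro u hu h1 h2
    rw [hseq]
    exact sInf_le ⟨⟨hu, h1⟩, h2⟩

end Sys
end FixAux

namespace FixAux

variable {κ : Ordinal} {L : Idx κ → Type u} [∀ α, CompleteLattice (L α)]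

theorem first_diff {x y : ∀ γ : Idx κ, L γ} (hne : x ≠ y) :
    ∃ μ : Idx κ, x μ ≠ y μ ∧ ∀ (β : Idx κ), β < μ → x β = y β := by
  have hs : {α : Idx κ | x α ≠ y α}.Nonempty := by
    by_contra hc
    rw [Set.not_nonempty_iff_eq_empty] at hc
    refine hne (funext fun α => ?_)
    by_contra hxa
    exact absurd (Set.mem_setOf_eq ▸ hxa : α ∈ {α : Idx κ | x α ≠ y α}) (hc ▸ Set.notMem_empty α)
  refine ⟨idx_wf.min _ hs, idx_wf.min_mem _ hs, fun β hβ => ?_⟩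
  by_contra hβne
  exact idx_wf.not_lt_min _ hβne hβ

theorem strOrd_le {x w : ∀ γ : Idx κ, L γ} (hxw : strOrd L x w) (μ : Idx κ)
    (heq : ∀ (β : Idx κ), β < μ → x β = w β) : x μ ≤ w μ := by
  rcases hxw with rfl | ⟨α, ⟨hle, hbelow⟩, hnot⟩
  · exact le_rfl
  rcases lt_trichotomy μ α with hμ | rfl | hμ
  · exact (hbelow μ hμ).le
  · exact hle
  · exact absurd ⟨(heq α hμ).ge, fun β hβ => (heq β (hβ.trans hμ)).symm⟩ hnot

theorem strOrd_of (x w : ∀ γ : Idx κ, L γ) (μ : Idx κ)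
    (heq : ∀ (β : Idx κ), β < μ → x β = w β) (hle : x μ ≤ w μ) (hne : x μ ≠ w μ) :
    strOrd L x w :=
  Or.inr ⟨μ, ⟨hle, heq⟩, fun hc => hne (le_antisymm hle hc.1)⟩

namespace Sys

variable (S : Sys L) (f : (∀ α, L α) → (∀ α, L α)) (X : Set (∀ γ, L γ))
variable (fS : ∀ x ∈ Compat L S.h, f x ∈ Compat L S.h)
variable (fmono : ∀ α : Idx κ, ∀ x ∈ Compat L S.h, ∀ y ∈ Compat L S.h,
    rel L α x y → rel L α (f x) (f y))
variable (hX : X ⊆ {x ∈ Compat L S.h | f x = x})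

theorem seq_compat (fS : ∀ x ∈ Compat L S.h, f x ∈ Compat L S.h)
    (fmono : ∀ α : Idx κ, ∀ x ∈ Compat L S.h, ∀ y ∈ Compat L S.h,
      rel L α x y → rel L α (f x) (f y))
    (hX : X ⊆ {x ∈ Compat L S.h | f x = x}) :
    S.seq f X ∈ Compat L S.h :=
  fun α β hβ => (S.seq_inv f X fS fmono hX α).1 β hβ

theorem seq_fixed (fS : ∀ x ∈ Compat L S.h, f x ∈ Compat L S.h)
    (fmono : ∀ α : Idx κ, ∀ x ∈ Compat L S.h, ∀ y ∈ Compat L S.h,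
      rel L α x y → rel L α (f x) (f y))
    (hX : X ⊆ {x ∈ Compat L S.h | f x = x}) :
    f (S.seq f X) = S.seq f X :=
  funext fun α => by
    rw [S.f_comp f fmono _ (S.seq_compat f X fS fmono hX) α,
      (S.seq_inv f X fS fmono hX α).2.1]

theorem seq_ub (fS : ∀ x ∈ Compat L S.h, f x ∈ Compat L S.h)
    (fmono : ∀ α : Idx κ, ∀ x ∈ Compat L S.h, ∀ y ∈ Compat L S.h,
      rel L α x y → rel L α (f x) (f y))
    (hX : X ⊆ {x ∈ Compat L S.h | f x = x}) :
    ∀ x ∈ X, strOrd L x (S.seq f X) := by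
  intro x hx
  by_cases hxz : x = S.seq f X
  · exact Or.inl hxz
  obtain ⟨μ, hμne, hμeq⟩ := first_diff hxz
  have hxs : x μ ≤ S.sval f X μ := by
    rw [S.sval_eq f X μ]
    exact le_sSup (Or.inl ⟨x, hx, hμeq, rfl⟩)
  exact strOrd_of x (S.seq f X) μ hμeq
    (hxs.trans (S.seq_inv f X fS fmono hX μ).2.2.1) hμne

theorem seq_lub (fS : ∀ x ∈ Compat L S.h, f x ∈ Compat L S.h)
    (fmono : ∀ α : Idx κ, ∀ x ∈ Compat L S.h, ∀ y ∈ Compat L S.h,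
      rel L α x y → rel L α (f x) (f y))
    (hX : X ⊆ {x ∈ Compat L S.h | f x = x}) :
    ∀ w ∈ {x ∈ Compat L S.h | f x = x}, (∀ x ∈ X, strOrd L x w) →
      strOrd L (S.seq f X) w := by
  intro w hw hub
  by_cases hzw : S.seq f X = w
  · exact Or.inl hzw
  obtain ⟨μ, hμne, hμeq⟩ := first_diff hzw
  have hwP : w μ ∈ S.Pset f X μ := fun β hβ => by
    rw [hw.1 μ β hβ, ← hμeq β hβ]
  have hsw : S.sval f X μ ≤ w μ := by
    rw [S.sval_eq f X μ]
    apply sSup_le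
    rintro u (⟨x, hxX, hag, rfl⟩ | hu)
    · exact strOrd_le (hub x hxX) μ (fun β hβ => (hag β hβ).trans (hμeq β hβ))
    · rw [Set.mem_singleton_iff] at hu
      subst hu
      exact sInf_le hwP
  have hFw : S.F f μ (w μ) = w μ := by
    rw [← S.f_comp f fmono w hw.1 μ, hw.2]
  exact strOrd_of (S.seq f X) w μ hμeq
    ((S.seq_inv f X fS fmono hX μ).2.2.2 (w μ) hwP hsw hFw.le) hμne

theorem seq_least_prefixed (fS : ∀ x ∈ Compat L S.h, f x ∈ Compat L S.h)
    (fmono : ∀ α : Idx κ, ∀ x ∈ Compat L S.h, ∀ y ∈ Compat L S.h,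
      rel L α x y → rel L α (f x) (f y)) :
    ∀ z' ∈ Compat L S.h, strOrd L (f z') z' →
      strOrd L (S.seq f (∅ : Set (∀ γ, L γ))) z' := by
  intro z' hz' hpre
  have hX : (∅ : Set (∀ γ, L γ)) ⊆ {x ∈ Compat L S.h | f x = x} := Set.empty_subset _
  set X : Set (∀ γ, L γ) := ∅ with hXdef
  by_cases h0 : S.seq f X = z'
  · exact Or.inl h0
  obtain ⟨μ, hμne, hμeq⟩ := first_diff h0
  have hz'P : z' μ ∈ S.Pset f X μ := fun β hβ => by
    rw [hz' μ β hβ, ← hμeq β hβ]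
  have hfz' : ∀ (β : Idx κ), β < μ → f z' β = z' β := by
    intro β hβ
    have h1 : z' β = S.seq f X β := (hμeq β hβ).symm
    rw [S.f_comp f fmono z' hz' β, h1, (S.seq_inv f X fS fmono hX β).2.1, ← h1]
  have hF : S.F f μ (z' μ) ≤ z' μ := by
    rw [← S.f_comp f fmono z' hz' μ]
    exact strOrd_le hpre μ hfz'
  have hs : S.sval f X μ ≤ z' μ := by
    rw [S.sval_eq f X μ]
    apply sSup_le
    rintro u (⟨x, hxX, _, rfl⟩ | hu)
    · exact absurd hxX (Set.notMem_empty x)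
    · rw [Set.mem_singleton_iff] at hu
      subst hu
      exact sInf_le hz'P
  exact strOrd_of (S.seq f X) z' μ hμeq
    ((S.seq_inv f X fS fmono hX μ).2.2.2 (z' μ) hz'P hs hF) hμne

end Sys
end FixAux

/-- if f is α-monotone for every α < κ on the limit model of an inverse
system with locally completely additive projections, then its fixed points form a
complete lattice under ⊑; in particular f has a ⊑-least fixed point x, and x ⊑ z
whenever f(z) ⊑ z. -/
theorem fixed_points_complete_lattice
    {κ : Ordinal} (hκ : Order.IsSuccLimit κ)
    (L : Idx κ → Type u) [∀ α, CompleteLattice (L α)]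
    (h : ∀ α β : Idx κ, β < α → L α → L β)
    (proj : ∀ (α β : Idx κ) (hβα : β < α), ∃ k : L β → L α,
        Monotone (h α β hβα) ∧ Monotone k ∧
        (∀ x, h α β hβα (k x) = x) ∧ (∀ y, k (h α β hβα y) ≤ y))
    (comp : ∀ (α β γ : Idx κ) (hγβ : γ < β) (hβα : β < α) (x : L α),
        h β γ hγβ (h α β hβα x) = h α γ (hγβ.trans hβα) x)
    (lca : ∀ (α β : Idx κ) (hβα : β < α), ∀ Y : Set (L α), Y.Nonempty →
        ∀ x : L β, (∀ y ∈ Y, h α β hβα y = x) → h α β hβα (sSup Y) = x)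
    (f : (∀ α, L α) → (∀ α, L α))
    (fS : ∀ x ∈ Compat L h, f x ∈ Compat L h)
    (fmono : ∀ α : Idx κ, ∀ x ∈ Compat L h, ∀ y ∈ Compat L h,
        rel L α x y → rel L α (f x) (f y)) :
    -- the fixed points of f form a complete lattice under ⊑
    (∀ X ⊆ {x ∈ Compat L h | f x = x}, ∃ z ∈ {x ∈ Compat L h | f x = x},
        (∀ x ∈ X, strOrd L x z) ∧
        ∀ w ∈ {x ∈ Compat L h | f x = x}, (∀ x ∈ X, strOrd L x w) → strOrd L z w) ∧
    -- f has a ⊑-least fixed point x, and x ⊑ z whenever f z ⊑ z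
    (∃ x ∈ {x ∈ Compat L h | f x = x},
        (∀ z ∈ {x ∈ Compat L h | f x = x}, strOrd L x z) ∧
        ∀ z ∈ Compat L h, strOrd L (f z) z → strOrd L x z) := by
  classical
  let S : FixAux.Sys L :=
    { h := h
      k := fun α β hβα => (proj α β hβα).choose
      hmono := fun α β hβα => (proj α β hβα).choose_spec.1
      kmono := fun α β hβα => (proj α β hβα).choose_spec.2.1
      hk := fun α β hβα => (proj α β hβα).choose_spec.2.2.1
      kh := fun α β hβα => (proj α β hβα).choose_spec.2.2.2
      comp := comp
      lca := lca }
  constructor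
  · intro X hXsub
    exact ⟨S.seq f X, ⟨S.seq_compat f X fS fmono hXsub, S.seq_fixed f X fS fmono hXsub⟩,
      S.seq_ub f X fS fmono hXsub, S.seq_lub f X fS fmono hXsub⟩
  · exact ⟨S.seq f ∅, ⟨S.seq_compat f ∅ fS fmono (Set.empty_subset _),
      S.seq_fixed f ∅ fS fmono (Set.empty_subset _)⟩,
      fun w hw => S.seq_lub f ∅ fS fmono (Set.empty_subset _) w hw
        (fun x hx => absurd hx (Set.notMem_empty x)),
      S.seq_least_prefixed f fS fmono⟩
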